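/- In the two-stage model with η(·, θ₀) and η'(·, θ₀) bounded Borel functions on [a,b], the score S_n(θ₀) = (n₁/σ²)(ȳ₁ − η(x₁, θ₀))η'(x₁, θ₀) + (n₂/σ²)(ȳ₂ − η(x₂, θ₀))η'(x₂, θ₀) satisfies E[S_n(θ₀)] = 0 and Var[S_n(θ₀)] = (n₁/σ²) η'(x₁, θ₀)² + (n₂/σ²) E[η'(x₂, θ₀)²]; that is, the variance of the score equals the Fisher information of the two-stage adaptive design, the two stage-wise score increments being uncorrelated. -/

import Mathlib

open MeasureTheory ProbabilityTheory Filter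

namespace TwoStageAux

open MeasureTheory ProbabilityTheory Filter Real
open scoped NNReal ENNReal


lemma gaussian_integral_eq {v : ℝ≥0} (hv : v ≠ 0) (g : ℝ → ℝ) :
    ∫ x, g x ∂(gaussianReal 0 v) = ∫ x, gaussianPDFReal 0 v x * g x := by
  rw [gaussianReal_of_var_ne_zero 0 hv]
  have hm : Measurable fun x => (gaussianPDFReal 0 v x).toNNReal :=
    (measurable_gaussianPDFReal 0 v).real_toNNReal
  have hd : gaussianPDF 0 v = fun x => (((gaussianPDFReal 0 v x).toNNReal : ℝ≥0) : ℝ≥0∞) := by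
    funext x; rfl
  rw [hd, integral_withDensity_eq_integral_smul hm g]
  congr 1; funext x
  simp [NNReal.smul_def, Real.coe_toNNReal _ (gaussianPDFReal_nonneg 0 v x)]

lemma gaussian_integrable_iff {v : ℝ≥0} (hv : v ≠ 0) (g : ℝ → ℝ) :
    Integrable g (gaussianReal 0 v) ↔
      Integrable (fun x => gaussianPDFReal 0 v x * g x) volume := by
  rw [gaussianReal_of_var_ne_zero 0 hv]
  have hm : Measurable fun x => (gaussianPDFReal 0 v x).toNNReal :=
    (measurable_gaussianPDFReal 0 v).real_toNNReal
  have hd : gaussianPDF 0 v = fun x => (((gaussianPDFReal 0 v x).toNNReal : ℝ≥0) : ℝ≥0∞) := by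
    funext x; rfl
  rw [hd, integrable_withDensity_iff_integrable_smul hm]
  constructor <;> intro h <;> (refine h.congr ?_ ) <;>
      (refine Filter.Eventually.of_forall fun x => ?_) <;>
    simp [NNReal.smul_def, Real.coe_toNNReal _ (gaussianPDFReal_nonneg 0 v x)]

lemma pdf_mul_eq (v : ℝ≥0) (g : ℝ → ℝ) (x : ℝ) :
    gaussianPDFReal 0 v x * g x
      = (Real.sqrt (2 * π * v))⁻¹ * (g x * Real.exp (-((2 * (v:ℝ))⁻¹) * x ^ 2)) := by
  rw [gaussianPDFReal]
  have : -(x - 0) ^ 2 / (2 * (v:ℝ)) = -((2 * (v:ℝ))⁻¹) * x ^ 2 := by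
    rw [sub_zero]; ring
  rw [this]; ring

lemma rpow_two_eq (x : ℝ) : x ^ (2:ℝ) = x ^ 2 := by
  rw [show (2:ℝ) = ((2:ℕ):ℝ) by norm_num, Real.rpow_natCast]

lemma gaussian_sq_integrable {v : ℝ≥0} (hv : v ≠ 0) :
    Integrable (fun x : ℝ => x ^ 2) (gaussianReal 0 v) := by
  rw [gaussian_integrable_iff hv]
  have hb : (0:ℝ) < (2 * (v:ℝ))⁻¹ := by
    have : (0:ℝ) < v := by positivity
    positivity
  have h := (integrable_rpow_mul_exp_neg_mul_sq hb (s := 2) (by norm_num)).const_mul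
    ((Real.sqrt (2 * π * v))⁻¹)
  refine h.congr (Filter.Eventually.of_forall fun x => ?_)
  dsimp only
  rw [pdf_mul_eq v (fun y => y ^ 2) x, rpow_two_eq]

lemma gaussian_memLp_two {v : ℝ≥0} (hv : v ≠ 0) :
    MemLp id 2 (gaussianReal 0 v) := by
  refine (memLp_two_iff_integrable_sq aestronglyMeasurable_id).mpr ?_
  exact gaussian_sq_integrable hv

lemma gaussian_integral_id {v : ℝ≥0} (hv : v ≠ 0) :
    ∫ x, x ∂(gaussianReal 0 v) = 0 := by
  have hmap := gaussianReal_map_const_mul (μ := 0) (v := v) (-1)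
  have hvv : (⟨(-1:ℝ) ^ 2, sq_nonneg _⟩ : ℝ≥0) = 1 := by
    ext; norm_num
  replace hmap : Measure.map (fun x : ℝ => -1 * x) (gaussianReal 0 v) = gaussianReal 0 v := by
    rw [hmap]; congr 1
    · simp
    · ext; simp
  have h2 : ∫ x, x ∂(gaussianReal 0 v)
      = ∫ x, (-1 : ℝ) * x ∂(gaussianReal 0 v) := by
    conv_lhs => rw [← hmap]
    exact integral_map (f := fun y : ℝ => y) (by fun_prop) aestronglyMeasurable_id
  rw [integral_const_mul] at h2
  linarith

lemma integral_sq_exp_Ioi {b : ℝ} (hb : 0 < b) :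
    ∫ x in Set.Ioi (0:ℝ), x ^ 2 * Real.exp (-b * x ^ 2)
      = b ^ (-((2:ℝ)+1)/2) * (1/2) * ((1/2) * Real.sqrt π) := by
  have h := integral_rpow_mul_exp_neg_mul_rpow (p := 2) (q := 2) (b := b)
    (by norm_num) (by norm_num) hb
  have hg : Real.Gamma (((2:ℝ) + 1) / 2) = (1/2) * Real.sqrt π := by
    rw [show ((2:ℝ) + 1) / 2 = 1/2 + 1 by norm_num, Real.Gamma_add_one (by norm_num),
      Real.Gamma_one_half_eq]
  rw [hg] at h
  rw [← h]
  refine setIntegral_congr_fun measurableSet_Ioi fun x hx => ?_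
  rw [rpow_two_eq]

lemma gaussian_integral_sq {v : ℝ≥0} (hv : v ≠ 0) :
    ∫ x, x ^ 2 ∂(gaussianReal 0 v) = v := by
  have hvpos : (0:ℝ) < v := by positivity
  have h2v : (0:ℝ) < 2 * (v:ℝ) := by positivity
  set b : ℝ := (2 * (v:ℝ))⁻¹ with hbdef
  have hb : 0 < b := by positivity
  rw [gaussian_integral_eq hv]
  have heq : (fun x : ℝ => gaussianPDFReal 0 v x * x ^ 2)
      = fun x => (Real.sqrt (2 * π * v))⁻¹ * (x ^ 2 * Real.exp (-b * x ^ 2)) := by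
    funext x; rw [pdf_mul_eq v (fun y => y ^ 2) x]
  rw [heq, integral_const_mul]
  have habs : ∫ x : ℝ, x ^ 2 * Real.exp (-b * x ^ 2)
      = 2 * ∫ x in Set.Ioi (0:ℝ), x ^ 2 * Real.exp (-b * x ^ 2) := by
    rw [← integral_comp_abs (f := fun x => x ^ 2 * Real.exp (-b * x ^ 2))]
    congr 1; funext x; rw [sq_abs]
  rw [habs, integral_sq_exp_Ioi hb]
  have hb3 : b ^ (-((2:ℝ)+1)/2) = (2 * (v:ℝ)) * Real.sqrt (2 * (v:ℝ)) := by
    rw [hbdef, show (-((2:ℝ)+1)/2) = -((3:ℝ)/2) by norm_num,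
      Real.inv_rpow h2v.le, ← Real.rpow_neg h2v.le, neg_neg,
      show (3:ℝ)/2 = 1 + 1/2 by norm_num, Real.rpow_add h2v, Real.rpow_one,
      Real.sqrt_eq_rpow]
  have hsq : Real.sqrt (2 * π * v) = Real.sqrt (2 * (v:ℝ)) * Real.sqrt π := by
    rw [show 2 * π * (v:ℝ) = (2 * (v:ℝ)) * π by ring, Real.sqrt_mul h2v.le]
  rw [hb3, hsq]
  have hs : (0:ℝ) < Real.sqrt (2 * (v:ℝ)) := Real.sqrt_pos.mpr h2v
  have hp : (0:ℝ) < Real.sqrt π := Real.sqrt_pos.mpr Real.pi_pos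
  field_simp

end TwoStageAux

/-- The score of the two-stage adaptive design has mean zero, and its variance equals the
Fisher information `(n₁/σ²)·η'(x₁, θ₀)² + (n₂/σ²)·E[η'(x₂, θ₀)²]`, the two stage-wise score
increments being uncorrelated. -/
theorem score_mean_zero_and_variance_eq_fisher_information
    {Ω : Type*} [mΩ : MeasurableSpace Ω] (μ : Measure Ω) [IsProbabilityMeasure μ]
    (n₁ : ℕ) (hn₁ : 1 ≤ n₁) (a b x₁ θ₀ σ : ℝ) (hab : a ≤ b) (hσ : 0 < σ)
    (η η' : ℝ → ℝ → ℝ)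
    (hderiv : ∀ x θ, HasDerivAt (fun t => η x t) (η' x θ) θ)
    (hη : Measurable fun x => η x θ₀) (hηbdd : ∃ C : ℝ, ∀ x ∈ Set.Icc a b, |η x θ₀| ≤ C)
    (hη' : Measurable fun x => η' x θ₀) (hη'bdd : ∃ C : ℝ, ∀ x ∈ Set.Icc a b, |η' x θ₀| ≤ C)
    (ε : (Fin n₁ ⊕ ℕ) → Ω → ℝ) (hεmeas : ∀ k, Measurable (ε k))
    (hεindep : iIndepFun ε μ)
    (hεlaw : ∀ k, μ.map (ε k) = gaussianReal 0 ⟨σ ^ 2, sq_nonneg σ⟩)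
    (ξ : ℝ → ℝ) (hξ : Measurable ξ) (hξab : ∀ y, ξ y ∈ Set.Icc a b)
    (ybar₁ : Ω → ℝ)
    (hybar₁ : ybar₁ = fun ω => (n₁ : ℝ)⁻¹ * ∑ i : Fin n₁, (η x₁ θ₀ + ε (Sum.inl i) ω))
    (n₂ : ℕ) (hn₂ : 1 ≤ n₂)
    (ybar₂ : Ω → ℝ)
    (hybar₂ : ybar₂ = fun ω =>
      (n₂ : ℝ)⁻¹ * ∑ j ∈ Finset.range n₂, (η (ξ (ybar₁ ω)) θ₀ + ε (Sum.inr j) ω))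
    -- the score at the true parameter
    (S : Ω → ℝ)
    (hS : S = fun ω =>
      ((n₁ : ℝ) / σ ^ 2) * (ybar₁ ω - η x₁ θ₀) * η' x₁ θ₀
        + ((n₂ : ℝ) / σ ^ 2) * (ybar₂ ω - η (ξ (ybar₁ ω)) θ₀) * η' (ξ (ybar₁ ω)) θ₀) :
    ∫ ω, S ω ∂μ = 0 ∧
      variance S μ =
        ((n₁ : ℝ) / σ ^ 2) * (η' x₁ θ₀) ^ 2
          + ((n₂ : ℝ) / σ ^ 2) * ∫ ω, (η' (ξ (ybar₁ ω)) θ₀) ^ 2 ∂μ := by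
  classical
  have hσ2 : (0:ℝ) < σ ^ 2 := by positivity
  have hvne : (⟨σ ^ 2, sq_nonneg σ⟩ : NNReal) ≠ 0 := by
    intro h
    have : σ ^ 2 = 0 := congrArg NNReal.toReal h
    nlinarith
  have hn₁R : (0:ℝ) < (n₁:ℝ) := by exact_mod_cast hn₁
  have hn₂R : (0:ℝ) < (n₂:ℝ) := by exact_mod_cast hn₂
  -- per-coordinate facts
  have hMem : ∀ k, MemLp (ε k) 2 μ := fun k => by
    have h := TwoStageAux.gaussian_memLp_two hvne
    rw [← hεlaw k] at h
    exact (memLp_map_measure_iff aestronglyMeasurable_id (hεmeas k).aemeasurable).mp h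
  have hInt0 : ∀ k, ∫ ω, ε k ω ∂μ = 0 := fun k => by
    have h := TwoStageAux.gaussian_integral_id hvne
    rwa [← hεlaw k,
      integral_map (hεmeas k).aemeasurable (f := fun y : ℝ => y) aestronglyMeasurable_id] at h
  have hSq0 : ∀ k, ∫ ω, (ε k ω) ^ 2 ∂μ = σ ^ 2 := fun k => by
    have h := TwoStageAux.gaussian_integral_sq hvne
    rwa [← hεlaw k,
      integral_map (hεmeas k).aemeasurable (f := fun y : ℝ => y ^ 2) (by fun_prop)] at h
  have hVar : ∀ k, variance (ε k) μ = σ ^ 2 := fun k => by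
    rw [variance_eq_sub (hMem k)]
    have h1 : μ[(ε k) ^ 2] = σ ^ 2 := hSq0 k
    have h2 : μ[ε k] = 0 := hInt0 k
    rw [h1, h2]; ring
  -- stage sums
  set E1 : Ω → ℝ := fun ω => ∑ i : Fin n₁, ε (Sum.inl i) ω with hE1def
  set E2 : Ω → ℝ := fun ω => ∑ j ∈ Finset.range n₂, ε (Sum.inr j) ω with hE2def
  have hE1eq : E1 = ∑ i : Fin n₁, ε (Sum.inl i) := by
    funext ω; simp [hE1def, Finset.sum_apply]
  have hE2eq : E2 = ∑ j ∈ Finset.range n₂, ε (Sum.inr j) := by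
    funext ω; simp [hE2def, Finset.sum_apply]
  have hE1Mem : MemLp E1 2 μ := by
    rw [hE1eq]; exact memLp_finsetSum' _ fun i _ => hMem _
  have hE2Mem : MemLp E2 2 μ := by
    rw [hE2eq]; exact memLp_finsetSum' _ fun i _ => hMem _
  have hE1int : Integrable E1 μ := hE1Mem.integrable one_le_two
  have hE2int : Integrable E2 μ := hE2Mem.integrable one_le_two
  have hE1int0 : ∫ ω, E1 ω ∂μ = 0 := by
    rw [hE1def]
    rw [integral_finset_sum _ fun i _ => (hMem _).integrable one_le_two]
    simp [hInt0]
  have hE2int0 : ∫ ω, E2 ω ∂μ = 0 := by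
    rw [hE2def]
    rw [integral_finset_sum _ fun i _ => (hMem _).integrable one_le_two]
    simp [hInt0]
  have hE1var : variance E1 μ = n₁ * σ ^ 2 := by
    rw [hE1eq, IndepFun.variance_sum (fun i _ => hMem _)
      (fun i _ j _ hij => hεindep.indepFun (by simpa using hij))]
    simp [hVar, Finset.card_univ]
  have hE2var : variance E2 μ = n₂ * σ ^ 2 := by
    rw [hE2eq, IndepFun.variance_sum (fun i _ => hMem _)
      (fun i _ j _ hij => hεindep.indepFun (by simpa using hij))]
    simp [hVar]
  have hE1sq : ∫ ω, E1 ω ^ 2 ∂μ = n₁ * σ ^ 2 := by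
    have h := variance_eq_sub hE1Mem
    rw [hE1var, show μ[E1] = (0:ℝ) from hE1int0] at h
    have h2 : μ[E1 ^ 2] = (n₁:ℝ) * σ ^ 2 := by linarith
    exact h2
  have hE2sq : ∫ ω, E2 ω ^ 2 ∂μ = n₂ * σ ^ 2 := by
    have h := variance_eq_sub hE2Mem
    rw [hE2var, show μ[E2] = (0:ℝ) from hE2int0] at h
    have h2 : μ[E2 ^ 2] = n₂ * σ ^ 2 := by linarith
    exact h2
  -- the bounded factor G
  have hybar₁meas : Measurable ybar₁ := by
    rw [hybar₁]
    exact measurable_const.mul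
      (Finset.measurable_sum _ fun i _ => measurable_const.add (hεmeas _))
  set G : Ω → ℝ := fun ω => η' (ξ (ybar₁ ω)) θ₀ with hGdef
  have hGmeas : Measurable G := hη'.comp (hξ.comp hybar₁meas)
  obtain ⟨C, hC⟩ := hη'bdd
  have hGbdd : ∀ ω, ‖G ω‖ ≤ C := fun ω => hC _ (hξab _)
  have hG2bdd : ∀ ω, ‖G ω ^ 2‖ ≤ C ^ 2 := fun ω => by
    have h1 := hGbdd ω
    have h2 : ‖G ω ^ 2‖ = ‖G ω‖ ^ 2 := by
      rw [Real.norm_eq_abs, Real.norm_eq_abs, abs_pow]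
    rw [h2]
    have := norm_nonneg (G ω)
    nlinarith
  have hGint : Integrable G μ :=
    (memLp_top_of_bound hGmeas.aestronglyMeasurable C
      (Eventually.of_forall hGbdd)).integrable le_top
  have hG2int : Integrable (fun ω => G ω ^ 2) μ :=
    (memLp_top_of_bound (hGmeas.pow_const 2).aestronglyMeasurable (C ^ 2)
      (Eventually.of_forall hG2bdd)).integrable le_top
  -- independence
  set S₁ : Finset (Fin n₁ ⊕ ℕ) := Finset.univ.image Sum.inl with hS₁def
  set S₂ : Finset (Fin n₁ ⊕ ℕ) := (Finset.range n₂).image Sum.inr with hS₂def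
  have hdisj : Disjoint S₁ S₂ := by
    simp only [Finset.disjoint_left, hS₁def, hS₂def, Finset.mem_image]
    rintro k ⟨i, _, rfl⟩ ⟨j, _, h⟩
    exact Sum.inr_ne_inl h
  have hbase := hεindep.indepFun_finset S₁ S₂ hdisj hεmeas
  have hsum1 : ∀ ω, (∑ i : {x // x ∈ S₁}, ε i.1 ω) = E1 ω := fun ω => by
    rw [Finset.sum_coe_sort S₁ (fun k => ε k ω), hS₁def,
      Finset.sum_image (fun x _ y _ h => Sum.inl_injective h)]
  have hsum2 : ∀ ω, (∑ j : {x // x ∈ S₂}, ε j.1 ω) = E2 ω := fun ω => by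
    rw [Finset.sum_coe_sort S₂ (fun k => ε k ω), hS₂def,
      Finset.sum_image (fun x _ y _ h => Sum.inr_injective h)]
  -- ybar₁ as a function of the first-stage coordinates
  have hybar₁comp : ∀ ω,
      ybar₁ ω = (n₁ : ℝ)⁻¹ * ∑ i : {x // x ∈ S₁}, (η x₁ θ₀ + ε i.1 ω) := fun ω => by
    have hl : ∑ i : {x // x ∈ S₁}, (η x₁ θ₀ + ε i.1 ω) = (n₁:ℝ) * η x₁ θ₀ + E1 ω := by
      rw [Finset.sum_add_distrib, Finset.sum_const, Finset.card_univ, Fintype.card_coe, hS₁def,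
        Finset.card_image_of_injective _ Sum.inl_injective, Finset.card_univ, Fintype.card_fin,
        hsum1 ω, nsmul_eq_mul]
    have hr : ∑ i : Fin n₁, (η x₁ θ₀ + ε (Sum.inl i) ω) = (n₁:ℝ) * η x₁ θ₀ + E1 ω := by
      rw [Finset.sum_add_distrib, Finset.sum_const, Finset.card_univ, Fintype.card_fin,
        nsmul_eq_mul, hE1def]
    simp only [hybar₁]
    rw [hr, hl]
  set ΦG : ({x // x ∈ S₁} → ℝ) → ℝ :=
    fun u => η' (ξ ((n₁ : ℝ)⁻¹ * ∑ i, (η x₁ θ₀ + u i))) θ₀ with hΦGdef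
  have hΦGmeas : Measurable ΦG :=
    hη'.comp (hξ.comp (measurable_const.mul
      (Finset.measurable_sum _ fun i _ => measurable_const.add (measurable_pi_apply i))))
  set Φ1 : ({x // x ∈ S₁} → ℝ) → ℝ := fun u => ∑ i, u i with hΦ1def
  have hΦ1meas : Measurable Φ1 :=
    Finset.measurable_sum _ fun i _ => measurable_pi_apply i
  set Ψ : ({x // x ∈ S₂} → ℝ) → ℝ := fun u => ∑ j, u j with hΨdef
  have hΨmeas : Measurable Ψ :=
    Finset.measurable_sum _ fun i _ => measurable_pi_apply i
  have hGcomp : G = ΦG ∘ (fun ω (i : {x // x ∈ S₁}) => ε i.1 ω) := by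
    funext ω
    simp only [Function.comp_apply, hGdef, hΦGdef]
    rw [hybar₁comp ω]
  have hE2comp : E2 = Ψ ∘ (fun ω (j : {x // x ∈ S₂}) => ε j.1 ω) := by
    funext ω
    simp only [Function.comp_apply, hΨdef]
    rw [hsum2 ω]
  have hE1Gcomp : (fun ω => E1 ω * G ω)
      = (fun u => Φ1 u * ΦG u) ∘ (fun ω (i : {x // x ∈ S₁}) => ε i.1 ω) := by
    funext ω
    simp only [Function.comp_apply, hGdef, hΦGdef, hΦ1def]
    rw [hybar₁comp ω, hsum1 ω]
  have hIndepGE2 : IndepFun G E2 μ := by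
    rw [hGcomp, hE2comp]; exact hbase.comp hΦGmeas hΨmeas
  have hIndepE1GE2 : IndepFun (fun ω => E1 ω * G ω) E2 μ := by
    rw [hE1Gcomp, hE2comp]; exact hbase.comp (hΦ1meas.mul hΦGmeas) hΨmeas
  have hIndepG2E22 : IndepFun (fun ω => G ω ^ 2) (fun ω => E2 ω ^ 2) μ :=
    hIndepGE2.comp (measurable_id.pow_const 2) (measurable_id.pow_const 2)
  -- product integrability
  have hGE2int : Integrable (fun ω => G ω * E2 ω) μ :=
    hE2int.bdd_mul hGmeas.aestronglyMeasurable (Eventually.of_forall hGbdd)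
  have hE1Gint : Integrable (fun ω => E1 ω * G ω) μ := by
    have h := hE1int.bdd_mul hGmeas.aestronglyMeasurable (Eventually.of_forall hGbdd)
    refine h.congr (Eventually.of_forall fun ω => ?_)
    ring
  have hE1GE2int : Integrable (fun ω => (E1 ω * G ω) * E2 ω) μ :=
    hIndepE1GE2.integrable_mul hE1Gint hE2int
  have hG2E22int : Integrable (fun ω => G ω ^ 2 * E2 ω ^ 2) μ :=
    hIndepG2E22.integrable_mul hG2int hE2Mem.integrable_sq
  -- key product expectations
  have hGE2zero : ∫ ω, G ω * E2 ω ∂μ = 0 := by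
    have h := hIndepGE2.integral_mul_eq_mul_integral hGint.1 hE2int.1
    have h0 : μ[E2] = (0:ℝ) := hE2int0
    rw [h0, mul_zero] at h
    exact h
  have hE1GE2zero : ∫ ω, (E1 ω * G ω) * E2 ω ∂μ = 0 := by
    have h := hIndepE1GE2.integral_mul_eq_mul_integral hE1Gint.1 hE2int.1
    have h0 : μ[E2] = (0:ℝ) := hE2int0
    rw [h0, mul_zero] at h
    exact h
  have hG2E22 : ∫ ω, G ω ^ 2 * E2 ω ^ 2 ∂μ = (∫ ω, G ω ^ 2 ∂μ) * ((n₂:ℝ) * σ ^ 2) := by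
    have h := hIndepG2E22.integral_mul_eq_mul_integral hG2int.1 hE2Mem.integrable_sq.1
    have h0 : μ[fun ω => E2 ω ^ 2] = (n₂:ℝ) * σ ^ 2 := hE2sq
    rw [h0] at h
    exact h
  -- rewrite the score
  have hSeq : S = fun ω =>
      (σ ^ 2)⁻¹ * η' x₁ θ₀ * E1 ω + (σ ^ 2)⁻¹ * (G ω * E2 ω) := by
    funext ω
    have h1 : ybar₁ ω - η x₁ θ₀ = (n₁ : ℝ)⁻¹ * E1 ω := by
      simp only [hybar₁, hE1def]
      rw [Finset.sum_add_distrib, Finset.sum_const, Finset.card_univ, Fintype.card_fin]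
      field_simp
      rw [nsmul_eq_mul]; ring
    have h2 : ybar₂ ω - η (ξ (ybar₁ ω)) θ₀ = (n₂ : ℝ)⁻¹ * E2 ω := by
      simp only [hybar₂, hE2def]
      rw [Finset.sum_add_distrib, Finset.sum_const, Finset.card_range]
      field_simp
      rw [nsmul_eq_mul]; ring
    simp only [hS, hGdef]
    rw [h1, h2]
    field_simp
  -- integrability of the two summands
  have hT1int : Integrable (fun ω => (σ ^ 2)⁻¹ * η' x₁ θ₀ * E1 ω) μ :=
    hE1int.const_mul _
  have hT2int : Integrable (fun ω => (σ ^ 2)⁻¹ * (G ω * E2 ω)) μ :=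
    hGE2int.const_mul _
  -- mean zero
  have hmean : ∫ ω, S ω ∂μ = 0 := by
    rw [hSeq, integral_add hT1int hT2int, integral_const_mul, integral_const_mul,
      hE1int0, hGE2zero]
    ring
  refine ⟨hmean, ?_⟩
  -- MemLp of the score
  have hSMem : MemLp S 2 μ := by
    rw [hSeq]
    have h1 : MemLp (fun ω => (σ ^ 2)⁻¹ * η' x₁ θ₀ * E1 ω) 2 μ :=
      hE1Mem.const_mul _
    have h2 : MemLp (fun ω => (σ ^ 2)⁻¹ * (G ω * E2 ω)) 2 μ := by
      refine MemLp.const_mul ?_ _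
      have hE2meas : Measurable E2 :=
        Finset.measurable_sum (Finset.range n₂) (fun j _ => hεmeas (Sum.inr j))
      refine hE2Mem.of_le_mul (c := C) (hGmeas.mul hE2meas).aestronglyMeasurable
        (Eventually.of_forall fun ω => ?_)
      rw [norm_mul]
      exact mul_le_mul_of_nonneg_right (hGbdd ω) (norm_nonneg _)
    exact h1.add h2
  -- variance computation
  rw [variance_eq_sub hSMem, show μ[S] = (0:ℝ) from hmean]
  have hSsq : ∀ ω, S ω ^ 2 =
      ((σ ^ 2)⁻¹ * η' x₁ θ₀) ^ 2 * E1 ω ^ 2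
        + (2 * ((σ ^ 2)⁻¹ * η' x₁ θ₀) * (σ ^ 2)⁻¹) * ((E1 ω * G ω) * E2 ω)
        + ((σ ^ 2)⁻¹) ^ 2 * (G ω ^ 2 * E2 ω ^ 2) := by
    intro ω
    rw [hSeq]
    ring
  have hintsq : μ[S ^ 2] = ∫ ω, (((σ ^ 2)⁻¹ * η' x₁ θ₀) ^ 2 * E1 ω ^ 2
        + (2 * ((σ ^ 2)⁻¹ * η' x₁ θ₀) * (σ ^ 2)⁻¹) * ((E1 ω * G ω) * E2 ω)
        + ((σ ^ 2)⁻¹) ^ 2 * (G ω ^ 2 * E2 ω ^ 2)) ∂μ := by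
    refine integral_congr_ae (Eventually.of_forall fun ω => ?_)
    exact hSsq ω
  have IA : Integrable (fun ω => ((σ ^ 2)⁻¹ * η' x₁ θ₀) ^ 2 * E1 ω ^ 2) μ :=
    hE1Mem.integrable_sq.const_mul _
  have IB : Integrable (fun ω => (2 * ((σ ^ 2)⁻¹ * η' x₁ θ₀) * (σ ^ 2)⁻¹)
      * ((E1 ω * G ω) * E2 ω)) μ :=
    hE1GE2int.const_mul _
  have IC : Integrable (fun ω => ((σ ^ 2)⁻¹) ^ 2 * (G ω ^ 2 * E2 ω ^ 2)) μ :=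
    hG2E22int.const_mul _
  have IAB : Integrable (fun ω => ((σ ^ 2)⁻¹ * η' x₁ θ₀) ^ 2 * E1 ω ^ 2
      + (2 * ((σ ^ 2)⁻¹ * η' x₁ θ₀) * (σ ^ 2)⁻¹) * ((E1 ω * G ω) * E2 ω)) μ := IA.add IB
  have hstep1 : μ[S ^ 2]
      = (∫ ω, (((σ ^ 2)⁻¹ * η' x₁ θ₀) ^ 2 * E1 ω ^ 2
          + (2 * ((σ ^ 2)⁻¹ * η' x₁ θ₀) * (σ ^ 2)⁻¹) * ((E1 ω * G ω) * E2 ω)) ∂μ)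
        + ∫ ω, ((σ ^ 2)⁻¹) ^ 2 * (G ω ^ 2 * E2 ω ^ 2) ∂μ := by
    rw [hintsq]; exact integral_add IAB IC
  have hstep2 : ∫ ω, (((σ ^ 2)⁻¹ * η' x₁ θ₀) ^ 2 * E1 ω ^ 2
          + (2 * ((σ ^ 2)⁻¹ * η' x₁ θ₀) * (σ ^ 2)⁻¹) * ((E1 ω * G ω) * E2 ω)) ∂μ
      = (∫ ω, ((σ ^ 2)⁻¹ * η' x₁ θ₀) ^ 2 * E1 ω ^ 2 ∂μ)
        + ∫ ω, (2 * ((σ ^ 2)⁻¹ * η' x₁ θ₀) * (σ ^ 2)⁻¹) * ((E1 ω * G ω) * E2 ω) ∂μ :=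
    integral_add IA IB
  rw [hstep1, hstep2, integral_const_mul, integral_const_mul, integral_const_mul,
    hE1sq, hE1GE2zero, hG2E22]
  have hGsqeq : ∫ ω, G ω ^ 2 ∂μ = ∫ ω, (η' (ξ (ybar₁ ω)) θ₀) ^ 2 ∂μ := by
    simp only [hGdef]
  rw [hGsqeq]
  field_simp
  ring
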